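/- Let γ: ℝ → ℝ² be the line γ(s) = (s,0). If f ∈ C_c(ℝ²) satisfies R_γ f(r,s) = 0 for all r > 0 and all s, and f is even with respect to reflection about the line (f(x₁,−x₂) = f(x₁,x₂)), then the Fourier transform of the function g(x) := f(x) restricted to the upper half plane, extended evenly, has circular means determined by f; in particular, for f even and continuous with R_γ f ≡ 0, f ≡ 0. -/

import Mathlib

open MeasureTheory Real intervalIntegral

section CircularAux
open Set


theorem lemA (f : ℝ × ℝ → ℝ) (hc : Continuous f) (hsupp : HasCompactSupport f)
    (hR : ∀ r > (0:ℝ), ∀ s : ℝ,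
      (∫ θ in (0:ℝ)..(2 * π), f (s + r * Real.cos θ, r * Real.sin θ) * r) = 0)
    (w : ℝ → ℝ) (hw : Continuous w) (s : ℝ) :
    ∫ y : ℝ × ℝ, f y * w ((y.1 - s)^2 + y.2^2) = 0 := by
  have hadd : ∀ x : ℝ × ℝ, ((s,0) : ℝ × ℝ) + x = (s + x.1, x.2) := by
    intro x; rw [Prod.ext_iff]; simp
  have htrans : ∫ y : ℝ × ℝ, f y * w ((y.1 - s)^2 + y.2^2)
      = ∫ x : ℝ × ℝ, f (s + x.1, x.2) * w (x.1^2 + x.2^2) := by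
    rw [← integral_add_left_eq_self (fun y : ℝ × ℝ => f y * w ((y.1 - s)^2 + y.2^2)) ((s, 0) : ℝ × ℝ)]
    congr 1; ext x; rw [hadd]; ring_nf
  rw [htrans]
  set F : ℝ × ℝ → ℝ := fun x => f (s + x.1, x.2) * w (x.1^2 + x.2^2) with hF
  have hFc : Continuous F := by fun_prop
  have hFs : HasCompactSupport F := by
    have h1 : HasCompactSupport (fun x : ℝ × ℝ => f (s + x.1, x.2)) := by
      have h2 : (fun x : ℝ × ℝ => f (s + x.1, x.2)) = f ∘ (Homeomorph.addLeft ((s,0) : ℝ × ℝ)) := by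
        ext x; simp [hadd]
      rw [h2]
      exact hsupp.comp_homeomorph _
    exact h1.mul_right
  rw [← integral_comp_polarCoord_symm F]
  obtain ⟨R, hR0, hRs⟩ : ∃ R > 0, ∀ x : ℝ × ℝ, R ≤ ‖x‖ → F x = 0 :=
    hFs.exists_pos_le_norm
  set g : ℝ × ℝ → ℝ := fun p => p.1 • F (p.1 * cos p.2, p.1 * sin p.2) with hgdef
  have hgc : Continuous g := by fun_prop
  have hcongr : ∀ p : ℝ × ℝ, p.1 • F (polarCoord.symm p) = g p := by
    intro p; rw [polarCoord_symm_apply]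
  rw [show (∫ p in polarCoord.target, p.1 • F (polarCoord.symm p)) = ∫ p in polarCoord.target, g p
    from setIntegral_congr_fun polarCoord.open_target.measurableSet (fun p _ => hcongr p)]
  -- g vanishes for |p.1| ≥ 2R
  have hgvanish : ∀ p : ℝ × ℝ, 2*R ≤ |p.1| → g p = 0 := by
    intro p hp
    have hub : R ≤ ‖((p.1 * cos p.2, p.1 * sin p.2) : ℝ × ℝ)‖ := by
      rw [Prod.norm_def]
      simp only [Real.norm_eq_abs, abs_mul]
      rcases le_total |cos p.2| |sin p.2| with h | h
      · have h1 : 1/2 ≤ |sin p.2| := by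
          nlinarith [sin_sq_add_cos_sq p.2, abs_nonneg (sin p.2), abs_nonneg (cos p.2),
            sq_abs (sin p.2), sq_abs (cos p.2)]
        have : R ≤ |p.1| * |sin p.2| := by nlinarith [abs_nonneg p.1]
        exact this.trans (le_max_right _ _)
      · have h1 : 1/2 ≤ |cos p.2| := by
          nlinarith [sin_sq_add_cos_sq p.2, abs_nonneg (sin p.2), abs_nonneg (cos p.2),
            sq_abs (sin p.2), sq_abs (cos p.2)]
        have : R ≤ |p.1| * |cos p.2| := by nlinarith [abs_nonneg p.1]
        exact this.trans (le_max_left _ _)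
    simp [hgdef, hRs _ hub]
  -- restrict the integral to Ioc 0 (2R)
  have htarget : polarCoord.target = (Ioc (0:ℝ) (2*R) ×ˢ Ioo (-π) π) ∪ (Ioi (2*R) ×ˢ Ioo (-π) π) := by
    rw [polarCoord_target, ← union_prod]
    congr 1
    rw [Ioc_union_Ioi_eq_Ioi]
    positivity
  have hmeas1 : MeasurableSet (Ioc (0:ℝ) (2*R) ×ˢ Ioo (-π) π) :=
    measurableSet_Ioc.prod measurableSet_Ioo
  have hmeas2 : MeasurableSet (Ioi (2*R) ×ˢ Ioo (-π) π) :=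
    measurableSet_Ioi.prod measurableSet_Ioo
  have hint1 : IntegrableOn g (Ioc (0:ℝ) (2*R) ×ˢ Ioo (-π) π) := by
    apply (hgc.continuousOn.integrableOn_compact ((isCompact_Icc (a := (0:ℝ)) (b := 2*R)).prod
      (isCompact_Icc (a := -π) (b := π)))).mono_set
    exact prod_mono Ioc_subset_Icc_self Ioo_subset_Icc_self
  have hzero2 : ∀ p ∈ Ioi (2*R) ×ˢ Ioo (-π) π, g p = 0 := by
    rintro ⟨r, θ⟩ ⟨hr, -⟩
    exact hgvanish _ (by rw [abs_of_pos (lt_trans (by positivity) hr)]; exact le_of_lt hr)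
  have hint2 : IntegrableOn g (Ioi (2*R) ×ˢ Ioo (-π) π) := by
    rw [integrableOn_congr_fun hzero2 hmeas2]
    exact integrableOn_zero
  have hdisj : Disjoint (Ioc (0:ℝ) (2*R) ×ˢ Ioo (-π) π) (Ioi (2*R) ×ˢ Ioo (-π) π) := by
    exact Disjoint.set_prod_left (Ioc_disjoint_Ioi le_rfl) _ _
  rw [htarget, setIntegral_union hdisj hmeas2 hint1 hint2]
  have h2 : ∫ p in Ioi (2*R) ×ˢ Ioo (-π) π, g p = 0 := by
    rw [setIntegral_congr_fun hmeas2 hzero2]; simp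
  rw [h2, add_zero]
  -- Fubini
  rw [Measure.volume_eq_prod] at hint1 ⊢
  rw [setIntegral_prod _ hint1]
  -- inner integral vanishes
  apply setIntegral_eq_zero_of_forall_eq_zero  -- maybe wrong name
  intro r hr
  have hrpos : 0 < r := hr.1
  have hper : Function.Periodic (fun θ => f (s + r * cos θ, r * sin θ) * r) (2*π) := by
    intro θ; simp [cos_add_two_pi, sin_add_two_pi]
  have hinner : ∀ θ : ℝ, g (r, θ) = (f (s + r * cos θ, r * sin θ) * r) * w (r^2) := by
    intro θ
    simp only [hgdef, hF, smul_eq_mul]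
    have : (r * cos θ)^2 + (r * sin θ)^2 = r^2 := by
      nlinarith [sin_sq_add_cos_sq θ]
    rw [this]; ring
  calc ∫ θ in Ioo (-π) π, g (r, θ)
      = ∫ θ in Ioo (-π) π, (f (s + r * cos θ, r * sin θ) * r) * w (r^2) := by
        exact setIntegral_congr_fun measurableSet_Ioo (fun θ _ => hinner θ)
    _ = (∫ θ in (-π)..π, (f (s + r * cos θ, r * sin θ) * r)) * w (r^2) := by
        rw [← intervalIntegral.integral_mul_const, intervalIntegral.integral_of_le (by linarith [pi_pos]),
          ← integral_Ioc_eq_integral_Ioo]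
    _ = 0 := by
        have := hper.intervalIntegral_add_eq (-π) 0
        rw [show -π + 2*π = π by ring, show (0:ℝ) + 2*π = 2*π by ring] at this
        rw [this, hR r hrpos s, zero_mul]


-- integrability helper
theorem hint' (f : ℝ × ℝ → ℝ) (hc : Continuous f) (hsupp : HasCompactSupport f)
    (g : ℝ × ℝ → ℝ) (hg : Continuous g) : Integrable (fun y => f y * g y) :=
  (hc.mul hg).integrable_of_hasCompactSupport hsupp.mul_right

theorem lemI (f : ℝ × ℝ → ℝ) (hc : Continuous f) (hsupp : HasCompactSupport f)
    (hA : ∀ (w : ℝ → ℝ), Continuous w → ∀ s : ℝ,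
      ∫ y : ℝ × ℝ, f y * w ((y.1 - s)^2 + y.2^2) = 0) :
    ∀ β α : ℕ, (∫ y : ℝ × ℝ, f y * ((y.1^2 + y.2^2)^α * y.1^β)) = 0 := by
  intro β
  induction β using Nat.strong_induction_on with
  | _ β IH =>
  intro α
  set k := α + β with hk
  have h0 : ∀ s : ℝ, ∫ y : ℝ × ℝ, f y * ((y.1 - s)^2 + y.2^2)^k = 0 :=
    fun s => hA (fun t => t^k) (by fun_prop) s
  set c : ℕ → ℕ → ℝ := fun i l => (k.choose i : ℝ) * ((k-i).choose l : ℝ) * (-2:ℝ)^(k-i-l) with hcdef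
  set I : ℕ → ℕ → ℝ := fun a b => ∫ y : ℝ × ℝ, f y * ((y.1^2 + y.2^2)^a * y.1^b) with hIdef
  have hexp : ∀ (s : ℝ) (y : ℝ × ℝ), f y * ((y.1-s)^2+y.2^2)^k
      = ∑ i ∈ Finset.range (k+1), ∑ l ∈ Finset.range (k-i+1),
        (f y * ((y.1^2+y.2^2)^i * y.1^(k-i-l))) * (c i l * s^(k-i+l)) := by
    intro s y
    have h1 : ((y.1-s)^2+y.2^2) = (y.1^2+y.2^2) + s*(s-2*y.1) := by ring
    rw [h1]
    set u : ℝ := y.1^2+y.2^2 with hu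
    set v : ℝ := y.1 with hv
    clear_value u v
    rw [add_pow, Finset.mul_sum]
    refine Finset.sum_congr rfl fun i hi => ?_
    have h2 : (s*(s-2*v))^(k-i) = s^(k-i) * (s + -(2*v))^(k-i) := by
      rw [← mul_pow]; ring_nf
    rw [h2, add_pow]
    simp only [Finset.mul_sum, Finset.sum_mul]
    refine Finset.sum_congr rfl fun l hl => ?_
    simp only [Finset.mem_range, Nat.lt_succ_iff] at hi hl
    have h3 : (-(2*v))^(k-i-l) = (-2)^(k-i-l) * v^(k-i-l) := by
      rw [← mul_pow]; ring_nf
    have h4 : s^(k-i) * s^l = s^(k-i+l) := by rw [← pow_add]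
    rw [hcdef]
    rw [h3, ← h4]
    ring
  have hterm_int : ∀ (i b : ℕ) (K : ℝ),
      Integrable (fun y : ℝ × ℝ => (f y * ((y.1^2+y.2^2)^i * y.1^b)) * K) := by
    intro i b K
    exact (hint' f hc hsupp _ (by fun_prop)).mul_const K
  have hsum : ∀ s : ℝ, ∑ i ∈ Finset.range (k+1), ∑ l ∈ Finset.range (k-i+1),
      I i (k-i-l) * (c i l * s^(k-i+l)) = 0 := by
    intro s
    rw [← h0 s]
    have e1 : ∫ y : ℝ × ℝ, f y * ((y.1-s)^2+y.2^2)^k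
        = ∑ i ∈ Finset.range (k+1), ∑ l ∈ Finset.range (k-i+1),
          ∫ y : ℝ × ℝ, (f y * ((y.1^2+y.2^2)^i * y.1^(k-i-l))) * (c i l * s^(k-i+l)) := by
      simp only [hexp s]
      rw [integral_finset_sum _ (fun i _ => integrable_finset_sum _ (fun l _ => hterm_int _ _ _))]
      exact Finset.sum_congr rfl fun i _ =>
        integral_finset_sum _ (fun l _ => hterm_int _ _ _)
    rw [e1]
    refine Finset.sum_congr rfl fun i _ => Finset.sum_congr rfl fun l _ => ?_
    rw [show (fun y : ℝ × ℝ => f y * ((y.1^2+y.2^2)^i * y.1^(k-i-l)) * (c i l * s^(k-i+l)))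
        = (fun y : ℝ × ℝ => (f y * ((y.1^2+y.2^2)^i * y.1^(k-i-l))) • (c i l * s^(k-i+l)))
      from rfl, _root_.integral_smul_const]
    rfl
  set q : Polynomial ℝ := ∑ i ∈ Finset.range (k+1), ∑ l ∈ Finset.range (k-i+1),
      Polynomial.C (I i (k-i-l) * c i l) * Polynomial.X^(k-i+l) with hq
  have hqeval : ∀ s : ℝ, q.eval s = 0 := by
    intro s
    rw [hq]
    simp only [Polynomial.eval_finset_sum, Polynomial.eval_mul, Polynomial.eval_C,
      Polynomial.eval_pow, Polynomial.eval_X]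
    rw [← hsum s]
    exact Finset.sum_congr rfl fun i _ => Finset.sum_congr rfl fun l _ => by ring
  have hq0 : q = 0 := Polynomial.funext (fun r => by rw [hqeval r, Polynomial.eval_zero])
  have hcoeff : q.coeff β = 0 := by rw [hq0, Polynomial.coeff_zero]
  rw [hq] at hcoeff
  simp only [Polynomial.finset_sum_coeff, Polynomial.coeff_C_mul, Polynomial.coeff_X_pow] at hcoeff
  have hred : ∑ i ∈ Finset.range (k+1), ∑ l ∈ Finset.range (k-i+1),
      I i (k-i-l) * c i l * (if β = k-i+l then (1:ℝ) else 0) = I α β * c α 0 := by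
    rw [Finset.sum_eq_single α]
    · rw [Finset.sum_eq_single 0]
      · simp [hk]
      · intro l hl hl0
        rw [if_neg (by omega), mul_zero]
      · intro h
        exact absurd (Finset.mem_range.mpr (by omega)) h
    · intro i hi hiα
      rw [Finset.mem_range] at hi
      apply Finset.sum_eq_zero
      intro l hl
      rw [Finset.mem_range] at hl
      by_cases hite : β = k - i + l
      · have hI0 : I i (k-i-l) = 0 := IH (k-i-l) (by omega) i
        rw [hI0, zero_mul, zero_mul]
      · rw [if_neg hite, mul_zero]
    · intro h
      exact absurd (Finset.mem_range.mpr (by omega)) h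
  rw [hred] at hcoeff
  have hc0 : c α 0 ≠ 0 := by
    rw [hcdef]
    simp only
    apply mul_ne_zero
    apply mul_ne_zero
    · exact_mod_cast Nat.cast_ne_zero.mpr (Nat.choose_pos (by omega : α ≤ k)).ne'
    · simp
    · exact pow_ne_zero _ (by norm_num)
  have : I α β = 0 := by
    rcases mul_eq_zero.mp hcoeff with h | h
    · exact h
    · exact absurd h hc0
  exact this



theorem lemJ (f : ℝ × ℝ → ℝ) (hc : Continuous f) (hsupp : HasCompactSupport f)
    (hI : ∀ β α : ℕ, (∫ y : ℝ × ℝ, f y * ((y.1^2 + y.2^2)^α * y.1^β)) = 0) :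
    ∀ j a i : ℕ, (∫ y : ℝ × ℝ, f y * ((y.1^2 + y.2^2)^a * (y.1^i * y.2^(2*j)))) = 0 := by
  intro j
  induction j with
  | zero =>
    intro a i
    rw [show (fun y : ℝ × ℝ => f y * ((y.1^2 + y.2^2)^a * (y.1^i * y.2^(2*0))))
        = fun y : ℝ × ℝ => f y * ((y.1^2 + y.2^2)^a * y.1^i) from funext fun y => by ring_nf]
    exact hI i a
  | succ j IHj =>
    intro a i
    have hptwise : ∀ y : ℝ × ℝ, f y * ((y.1^2 + y.2^2)^a * (y.1^i * y.2^(2*(j+1))))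
        = f y * ((y.1^2 + y.2^2)^(a+1) * (y.1^i * y.2^(2*j)))
          - f y * ((y.1^2 + y.2^2)^a * (y.1^(i+2) * y.2^(2*j))) := by
      intro y; ring
    rw [show (fun y : ℝ × ℝ => f y * ((y.1^2 + y.2^2)^a * (y.1^i * y.2^(2*(j+1)))))
        = fun y : ℝ × ℝ => (f y * ((y.1^2 + y.2^2)^(a+1) * (y.1^i * y.2^(2*j))))
          - (f y * ((y.1^2 + y.2^2)^a * (y.1^(i+2) * y.2^(2*j)))) from funext hptwise]
    rw [integral_sub (hint' f hc hsupp _ (by fun_prop)) (hint' f hc hsupp _ (by fun_prop))]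
    rw [IHj (a+1) i, IHj a (i+2), sub_zero]

theorem lemP (f : ℝ × ℝ → ℝ) (hc : Continuous f) (hsupp : HasCompactSupport f)
    (hJ : ∀ j a i : ℕ, (∫ y : ℝ × ℝ, f y * ((y.1^2 + y.2^2)^a * (y.1^i * y.2^(2*j)))) = 0)
    (p : MvPolynomial (Fin 2) ℝ) :
    ∫ y : ℝ × ℝ, f y * (∑ d ∈ p.support, p.coeff d * (y.1 ^ d 0 * y.2 ^ (2 * d 1))) = 0 := by
  have hmono : ∀ i i' : ℕ, ∫ y : ℝ × ℝ, f y * (y.1 ^ i * y.2 ^ (2 * i')) = 0 := by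
    intro i i'
    have := hJ i' 0 i
    simpa using this
  rw [show (fun y : ℝ × ℝ => f y * (∑ d ∈ p.support, p.coeff d * (y.1 ^ d 0 * y.2 ^ (2 * d 1))))
      = fun y : ℝ × ℝ => ∑ d ∈ p.support, (f y * (y.1 ^ d 0 * y.2 ^ (2 * d 1))) * p.coeff d
    from funext fun y => by rw [Finset.mul_sum]; exact Finset.sum_congr rfl fun d _ => by ring]
  rw [integral_finset_sum _ (fun d _ => ((hint' f hc hsupp _ (by fun_prop)).mul_const _))]
  refine Finset.sum_eq_zero fun d _ => ?_
  rw [show (fun y : ℝ × ℝ => f y * (y.1 ^ d 0 * y.2 ^ (2 * d 1)) * p.coeff d)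
      = fun y : ℝ × ℝ => (f y * (y.1 ^ d 0 * y.2 ^ (2 * d 1))) • p.coeff d from rfl,
    _root_.integral_smul_const, hmono (d 0) (d 1), zero_smul]



theorem lemFinal (f : ℝ × ℝ → ℝ) (hc : Continuous f) (hsupp : HasCompactSupport f)
    (heven : ∀ x : ℝ × ℝ, f (x.1, -x.2) = f x)
    (hP : ∀ p : MvPolynomial (Fin 2) ℝ,
      ∫ y : ℝ × ℝ, f y * (∑ d ∈ p.support, p.coeff d * (y.1 ^ d 0 * y.2 ^ (2 * d 1))) = 0) :
    ∀ x : ℝ × ℝ, f x = 0 := by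
  obtain ⟨R, hR0, hRs⟩ : ∃ R > 0, ∀ x : ℝ × ℝ, R ≤ ‖x‖ → f x = 0 :=
    hsupp.exists_pos_le_norm
  set D : Set (ℝ × ℝ) := Icc (-R) R ×ˢ Icc 0 (R^2) with hD
  have hDcomp : IsCompact D := isCompact_Icc.prod isCompact_Icc
  haveI : CompactSpace D := isCompact_iff_compactSpace.mp hDcomp
  set F : C(D, ℝ) := ⟨fun x => f ((x : ℝ × ℝ).1, Real.sqrt (x : ℝ × ℝ).2), by fun_prop⟩ with hF
  set c1 : C(D, ℝ) := ⟨fun x => (x : ℝ × ℝ).1, by fun_prop⟩ with hc1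
  set c2 : C(D, ℝ) := ⟨fun x => (x : ℝ × ℝ).2, by fun_prop⟩ with hc2
  set A : Subalgebra ℝ C(D, ℝ) := Algebra.adjoin ℝ ({c1, c2} : Set C(D, ℝ)) with hA
  have hsep : A.SeparatesPoints := by
    intro x y hxy
    by_cases h1 : (x : ℝ × ℝ).1 ≠ (y : ℝ × ℝ).1
    · exact ⟨c1, ⟨c1, Algebra.subset_adjoin (by simp), rfl⟩, h1⟩
    · refine ⟨c2, ⟨c2, Algebra.subset_adjoin (by simp), rfl⟩, ?_⟩
      push_neg at h1
      intro h2
      exact hxy (Subtype.ext (Prod.ext h1 h2))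
  -- every element of A is a polynomial in the coordinates
  have hrep : ∀ g ∈ A, ∃ p : MvPolynomial (Fin 2) ℝ, ∀ x : D,
      g x = MvPolynomial.eval (fun i : Fin 2 =>
        if i = 0 then (x : ℝ × ℝ).1 else (x : ℝ × ℝ).2) p := by
    intro g hg
    induction hg using Algebra.adjoin_induction with
    | mem u hu =>
      rcases hu with h | h
      · exact ⟨MvPolynomial.X 0, fun x => by rw [h]; simp [hc1]⟩
      · simp only [Set.mem_singleton_iff] at h
        exact ⟨MvPolynomial.X 1, fun x => by rw [h]; simp [hc2]⟩
    | algebraMap r => exact ⟨MvPolynomial.C r, fun x => by simp⟩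
    | add u v hu hv hpu hpv =>
      obtain ⟨p, hp⟩ := hpu; obtain ⟨q, hq⟩ := hpv
      exact ⟨p + q, fun x => by simp [hp x, hq x]⟩
    | mul u v hu hv hpu hpv =>
      obtain ⟨p, hp⟩ := hpu; obtain ⟨q, hq⟩ := hpv
      exact ⟨p * q, fun x => by simp [hp x, hq x]⟩
  have key : ∀ ε > (0:ℝ), |∫ y : ℝ × ℝ, f y * f y| ≤ ε * ∫ y : ℝ × ℝ, |f y| := by
    intro ε hε
    obtain ⟨⟨g, hgA⟩, hgnear⟩ :=
      ContinuousMap.exists_mem_subalgebra_near_continuousMap_of_separatesPoints A hsep F ε hε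
    obtain ⟨p, hp⟩ := hrep g hgA
    set e : ℝ × ℝ → ℝ :=
      fun y => ∑ d ∈ p.support, p.coeff d * (y.1 ^ d 0 * y.2 ^ (2 * d 1)) with he
    have he_cont : Continuous e := continuous_finset_sum _ fun d _ => by fun_prop
    have hfe : ∫ y : ℝ × ℝ, f y * e y = 0 := hP p
    have hbound : ∀ y : ℝ × ℝ, |f y * (f y - e y)| ≤ |f y| * ε := by
      intro y
      by_cases hfy : f y = 0
      · simp [hfy]
      · have hy : ‖y‖ < R := by
          by_contra h
          exact hfy (hRs y (not_lt.mp h))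
        have hy1 : |y.1| ≤ R := le_of_lt (lt_of_le_of_lt (norm_fst_le y) hy)
        have hy2 : |y.2| ≤ R := le_of_lt (lt_of_le_of_lt (norm_snd_le y) hy)
        have hxD : ((y.1, y.2^2) : ℝ × ℝ) ∈ D := by
          simp only [hD, mem_prod, mem_Icc]
          refine ⟨⟨?_, ?_⟩, ?_, ?_⟩ <;>
            nlinarith [abs_le.mp hy1, abs_le.mp hy2, sq_abs y.2, sq_nonneg y.2, abs_nonneg y.2]
        set x : D := ⟨(y.1, y.2^2), hxD⟩ with hx
        have h1 : e y = g x := by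
          rw [hp x, MvPolynomial.eval_eq']
          refine Finset.sum_congr rfl fun d _ => ?_
          rw [Fin.prod_univ_two]
          simp only [hx]
          norm_num [← pow_mul]
        have h2 : f y = F x := by
          simp only [hF, ContinuousMap.coe_mk, hx]
          rw [Real.sqrt_sq_eq_abs]
          rcases abs_choice y.2 with h | h
          · rw [h]
          · rw [h, show (y.1, -y.2) = ((y.1, y.2).1, -(y.1,y.2).2) from rfl, heven]
        have h3 : |f y - e y| ≤ ε := by
          rw [h1, h2]
          have := ContinuousMap.norm_coe_le_norm ((F : C(D,ℝ)) - g) x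
          simp only [ContinuousMap.sub_apply] at this
          calc |F x - g x| ≤ ‖F - (g : C(D,ℝ))‖ := this
            _ = ‖(g : C(D,ℝ)) - F‖ := by rw [norm_sub_rev]
            _ ≤ ε := le_of_lt hgnear
        calc |f y * (f y - e y)| = |f y| * |f y - e y| := abs_mul _ _
          _ ≤ |f y| * ε := mul_le_mul_of_nonneg_left h3 (abs_nonneg _)
    have hsplit : ∫ y : ℝ × ℝ, f y * (f y - e y) = ∫ y : ℝ × ℝ, f y * f y := by
      rw [show (fun y : ℝ × ℝ => f y * (f y - e y))
          = fun y : ℝ × ℝ => f y * f y - f y * e y from funext fun y => by ring]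
      rw [integral_sub (hint' f hc hsupp f hc) (hint' f hc hsupp e he_cont), hfe, sub_zero]
    calc |∫ y : ℝ × ℝ, f y * f y| = |∫ y : ℝ × ℝ, f y * (f y - e y)| := by rw [hsplit]
      _ ≤ ∫ y : ℝ × ℝ, |f y * (f y - e y)| := by
          have := MeasureTheory.norm_integral_le_integral_norm
            (μ := volume) (fun y : ℝ × ℝ => f y * (f y - e y))
          simp only [Real.norm_eq_abs] at this
          exact this
      _ ≤ ∫ y : ℝ × ℝ, |f y| * ε := by
          apply MeasureTheory.integral_mono
          · exact (hint' f hc hsupp _ (hc.sub he_cont)).abs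
          · exact (hc.abs.integrable_of_hasCompactSupport hsupp.abs).mul_const ε
          · exact hbound
      _ = ε * ∫ y : ℝ × ℝ, |f y| := by
          rw [show (fun y : ℝ × ℝ => |f y| * ε) = fun y : ℝ × ℝ => |f y| • ε from rfl,
            _root_.integral_smul_const]
          simp [mul_comm]
  -- conclude
  have hC0 : 0 ≤ ∫ y : ℝ × ℝ, |f y| := integral_nonneg fun y => abs_nonneg _
  have hzero : ∫ y : ℝ × ℝ, f y * f y = 0 := by
    by_contra h
    have hpos : 0 < |∫ y : ℝ × ℝ, f y * f y| := abs_pos.mpr h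
    set Cn := ∫ y : ℝ × ℝ, |f y| with hCn
    have hk := key (|∫ y : ℝ × ℝ, f y * f y| / (2 * (Cn + 1))) (by positivity)
    rw [div_mul_eq_mul_div, le_div_iff₀ (by positivity : (0:ℝ) < 2 * (Cn + 1))] at hk
    nlinarith [mul_nonneg hpos.le hC0]
  have hae : (fun y : ℝ × ℝ => f y * f y) =ᵐ[volume] 0 :=
    (integral_eq_zero_iff_of_nonneg (fun y => mul_self_nonneg (f y))
      (hint' f hc hsupp f hc)).mp hzero
  have heq : (fun y : ℝ × ℝ => f y * f y) = 0 :=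
    ((hc.mul hc).ae_eq_iff_eq volume continuous_const).mp hae
  intro x
  have := congrFun heq x
  simpa using mul_self_eq_zero.mp this

end CircularAux

/-- If `γ(s) = (s,0)` and `f` is continuous, compactly supported, even with respect to
reflection about the line `x₂ = 0`, and its circular transform centered on `γ` vanishes
identically, then `f ≡ 0`. -/
theorem circular_transform_even_injective
    (f : ℝ × ℝ → ℝ) (hc : Continuous f) (hsupp : HasCompactSupport f)
    (heven : ∀ x : ℝ × ℝ, f (x.1, -x.2) = f x)
    (hR : ∀ r > (0:ℝ), ∀ s : ℝ,
      (∫ θ in (0:ℝ)..(2 * π), f (s + r * Real.cos θ, r * Real.sin θ) * r) = 0) :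
    ∀ x : ℝ × ℝ, f x = 0 := by
  have hA := lemA f hc hsupp hR
  have hI := lemI f hc hsupp hA
  have hJ := lemJ f hc hsupp hI
  have hP := lemP f hc hsupp hJ
  exact lemFinal f hc hsupp heven hP
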